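/- (Lemma 3, variance-reduction lemma) Let G ≥ 0, α ∈ (0,1], σ ≥ 0, and s ≥ 8^{1/(2α)} − 1. Let {a_t}_{t=0}^{T} be points in ℝ^n with a_0 = a_1 and ‖a_t − a_{t−1}‖ ≤ G/(t+s)^α for all 1 ≤ t ≤ T. Let {ã_t}_{t=1}^{T} be random vectors such that, with F_{t−1} the σ-field generated by ã_1,…,ã_{t−1} (F_0 trivial), E[ã_t | F_{t−1}] = a_t and E[‖ã_t − a_t‖² | F_{t−1}] ≤ σ² for every t ≥ 1. Define d_0 ∈ ℝ^n fixed and d_t = (1 − ρ_t)d_{t−1} + ρ_t ã_t with ρ_t = 2/(t+s)^{2α/3}. Then for every 0 ≤ t ≤ T, E[‖a_t − d_t‖²] ≤ Q/(t+s+1)^{2α/3}, where Q = max{ ‖a_0 − d_0‖²·(s+1)^{2α/3}, 4σ² + 2G² }. -/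

import Mathlib

set_option maxHeartbeats 1000000


open MeasureTheory ProbabilityTheory
open scoped ProbabilityTheory

open MeasureTheory

lemma aux_norm_add_sq_le {E : Type*} [NormedAddCommGroup E] [InnerProductSpace ℝ E]
    (u v : E) {c : ℝ} (hc : 0 < c) :
    ‖u + v‖ ^ 2 ≤ (1 + c) * ‖u‖ ^ 2 + (1 + 1 / c) * ‖v‖ ^ 2 := by
  have h1 : ‖u + v‖ ^ 2 = ‖u‖ ^ 2 + 2 * inner ℝ u v + ‖v‖ ^ 2 := norm_add_sq_real u v
  have h2 : inner ℝ u v ≤ ‖u‖ * ‖v‖ := real_inner_le_norm u v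
  have h3 : 0 ≤ (c * ‖u‖ - ‖v‖) ^ 2 := sq_nonneg _
  have hc' : c ≠ 0 := ne_of_gt hc
  rw [h1]
  have h4 : 2 * (‖u‖ * ‖v‖) ≤ c * ‖u‖ ^ 2 + (1 / c) * ‖v‖ ^ 2 := by
    rw [div_mul_eq_mul_div, one_mul]
    rw [← sub_nonneg]
    have : c * ‖u‖ ^ 2 + ‖v‖ ^ 2 / c - 2 * (‖u‖ * ‖v‖) = (c * ‖u‖ - ‖v‖) ^ 2 / c := by
      field_simp; ring
    rw [this]
    positivity
  nlinarith

lemma aux_coord {n : ℕ} (x : EuclideanSpace ℝ (Fin n)) (i : Fin n) : |x i| ≤ ‖x‖ := by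
  rw [EuclideanSpace.norm_eq, ← Real.sqrt_sq_eq_abs]
  refine Real.sqrt_le_sqrt ?_
  have := Finset.single_le_sum (f := fun j => ‖x j‖ ^ 2) (fun j _ => sq_nonneg _)
    (Finset.mem_univ i)
  simpa [Real.norm_eq_abs, sq_abs] using this


lemma aux_step {h e K G2 σ2 : ℝ} (hh : 2 ≤ h) (he : 0 ≤ e) (hK : 0 ≤ K)
    (hKb : K * h ^ 3 ≤ G2) (hσ2 : 0 ≤ σ2) :
    (1 - 2 / h) ^ 2 * ((1 + 2 / h) * e + (1 + h / 2) * K) + (2 / h) ^ 2 * σ2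
      ≤ (1 - 2 / h) * e + (G2 + 4 * σ2) / h ^ 2 := by
  have h0 : (0 : ℝ) < h := by linarith
  have h2 : (0 : ℝ) < h ^ 2 := by positivity
  have hr1 : 2 / h ≤ 1 := by rw [div_le_one h0]; linarith
  have hr0 : 0 ≤ 1 - 2 / h := by linarith
  have ha1 : (1 - 2 / h) ^ 2 * (1 + 2 / h) ≤ 1 - 2 / h := by
    have hin : (1 - 2 / h) * (1 + 2 / h) ≤ 1 := by nlinarith [sq_nonneg (2 / h)]
    calc (1 - 2 / h) ^ 2 * (1 + 2 / h) = (1 - 2 / h) * ((1 - 2 / h) * (1 + 2 / h)) := by ring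
      _ ≤ (1 - 2 / h) * 1 := mul_le_mul_of_nonneg_left hin hr0
      _ = 1 - 2 / h := mul_one _
  have ht1 : (1 - 2 / h) ^ 2 * ((1 + 2 / h) * e) ≤ (1 - 2 / h) * e := by
    calc (1 - 2 / h) ^ 2 * ((1 + 2 / h) * e) = ((1 - 2 / h) ^ 2 * (1 + 2 / h)) * e := by ring
      _ ≤ (1 - 2 / h) * e := mul_le_mul_of_nonneg_right ha1 he
  have ha2 : (1 - 2 / h) ^ 2 * (1 + h / 2) ≤ h := by
    have hsq : (1 - 2 / h) ^ 2 ≤ 1 := by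
      have h1 : (1 : ℝ) - 2 / h ≤ 1 := by
        have h2h : (0:ℝ) ≤ 2 / h := by positivity
        linarith
      calc (1 - 2 / h) ^ 2 = (1 - 2 / h) * (1 - 2 / h) := sq (1 - 2/h) ▸ rfl
        _ ≤ 1 * 1 := mul_le_mul h1 h1 hr0 (by norm_num)
        _ = 1 := by norm_num
    have hph : 1 + h / 2 ≤ h := by linarith
    calc (1 - 2 / h) ^ 2 * (1 + h / 2) ≤ 1 * (1 + h / 2) :=
          mul_le_mul_of_nonneg_right hsq (by linarith)
      _ ≤ h := by linarith
  have ht2 : (1 - 2 / h) ^ 2 * ((1 + h / 2) * K) ≤ G2 / h ^ 2 := by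
    have hstep : (1 - 2 / h) ^ 2 * ((1 + h / 2) * K) ≤ h * K := by
      calc (1 - 2 / h) ^ 2 * ((1 + h / 2) * K) = ((1 - 2 / h) ^ 2 * (1 + h / 2)) * K := by ring
        _ ≤ h * K := mul_le_mul_of_nonneg_right ha2 hK
    refine hstep.trans ?_
    rw [le_div_iff₀ h2]
    calc h * K * h ^ 2 = K * h ^ 3 := by ring
      _ ≤ G2 := hKb
  have ht3 : (2 / h) ^ 2 * σ2 = 4 * σ2 / h ^ 2 := by
    rw [div_pow, div_mul_eq_mul_div]
    norm_num
  linarith [ht1, ht2, ht3,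
    (by ring : (1 - 2 / h) ^ 2 * ((1 + 2 / h) * e + (1 + h / 2) * K)
      = (1 - 2 / h) ^ 2 * ((1 + 2 / h) * e) + (1 - 2 / h) ^ 2 * ((1 + h / 2) * K)),
    (by ring : G2 / h ^ 2 + 4 * σ2 / h ^ 2 = (G2 + 4 * σ2) / h ^ 2)]

lemma aux_final {Q C x pp : ℝ} {e : ℝ} (hx : 1 ≤ x) (hp0 : 0 < pp) (hp1 : pp ≤ 1)
    (hh2 : 2 ≤ x ^ pp) (hQ0 : 0 ≤ Q) (hCQ : C ≤ Q) (he0 : 0 ≤ e)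
    (hie : e ≤ Q / x ^ pp) :
    (1 - 2 / x ^ pp) * e + C / (x ^ pp) ^ 2 ≤ Q / (x + 1) ^ pp := by
  have hx0 : (0 : ℝ) < x := by linarith
  have h0 : (0 : ℝ) < x ^ pp := by linarith
  have h2 : (0 : ℝ) < (x ^ pp) ^ 2 := by positivity
  have hh'0 : (0 : ℝ) < (x + 1) ^ pp := Real.rpow_pos_of_pos (by linarith) _
  have hhx : x ^ pp ≤ x := by
    calc x ^ pp ≤ x ^ (1 : ℝ) := Real.rpow_le_rpow_of_exponent_le hx hp1
      _ = x := Real.rpow_one x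
  have hb' : (x + 1) ^ pp * x ≤ x ^ pp * (x + pp) := by
    have hbern : (1 + 1 / x) ^ pp ≤ 1 + pp * (1 / x) :=
      rpow_one_add_le_one_add_mul_self
        (by have := one_div_pos.mpr hx0; linarith) hp0.le hp1
    have hxx : x + 1 = x * (1 + 1 / x) := by field_simp
    have hmul : (x + 1) ^ pp = x ^ pp * (1 + 1 / x) ^ pp := by
      rw [hxx, Real.mul_rpow hx0.le (by positivity)]
    calc (x + 1) ^ pp * x = x ^ pp * (1 + 1 / x) ^ pp * x := by rw [hmul]
      _ ≤ x ^ pp * (1 + pp * (1 / x)) * x := by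
          apply mul_le_mul_of_nonneg_right _ hx0.le
          exact mul_le_mul_of_nonneg_left hbern (by positivity)
      _ = x ^ pp * (x + pp) := by field_simp
  have hkey : (x + 1) ^ pp * (x ^ pp - 1) ≤ (x ^ pp) ^ 2 := by
    have h9 : (x + pp) * (x ^ pp - 1) ≤ x ^ pp * x := by nlinarith
    have h10 : (x + 1) ^ pp * (x ^ pp - 1) * x ≤ (x ^ pp) ^ 2 * x := by
      calc (x + 1) ^ pp * (x ^ pp - 1) * x = ((x + 1) ^ pp * x) * (x ^ pp - 1) := by ring
        _ ≤ (x ^ pp * (x + pp)) * (x ^ pp - 1) :=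
            mul_le_mul_of_nonneg_right hb' (by linarith)
        _ = x ^ pp * ((x + pp) * (x ^ pp - 1)) := by ring
        _ ≤ x ^ pp * (x ^ pp * x) := mul_le_mul_of_nonneg_left h9 h0.le
        _ = (x ^ pp) ^ 2 * x := by ring
    exact le_of_mul_le_mul_right h10 hx0
  have hL : (1 - 2 / x ^ pp) * e + C / (x ^ pp) ^ 2 ≤ Q * (x ^ pp - 1) / (x ^ pp) ^ 2 := by
    have hcoef : 0 ≤ 1 - 2 / x ^ pp := by
      have : 2 / x ^ pp ≤ 1 := by rw [div_le_one h0]; linarith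
      linarith
    have e1 : (1 - 2 / x ^ pp) * (Q / x ^ pp) + C / (x ^ pp) ^ 2
        = (Q * (x ^ pp - 2) + C) / (x ^ pp) ^ 2 := by field_simp
    have e2 : (1 - 2 / x ^ pp) * e ≤ (1 - 2 / x ^ pp) * (Q / x ^ pp) :=
      mul_le_mul_of_nonneg_left hie hcoef
    have e3 : (Q * (x ^ pp - 2) + C) / (x ^ pp) ^ 2 ≤ Q * (x ^ pp - 1) / (x ^ pp) ^ 2 :=
      (div_le_div_iff_of_pos_right h2).mpr (by nlinarith)
    linarith
  refine hL.trans ?_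
  rw [div_le_div_iff₀ h2 hh'0]
  calc Q * (x ^ pp - 1) * (x + 1) ^ pp = Q * ((x + 1) ^ pp * (x ^ pp - 1)) := by ring
    _ ≤ Q * (x ^ pp) ^ 2 := mul_le_mul_of_nonneg_left hkey hQ0
    _ = Q * ((x ^ pp) ^ 2) := rfl


/-- Lemma 3, variance-reduction lemma. Let `G ≥ 0`, `α ∈ (0,1]`, `σ ≥ 0`,
`s ≥ 8^(1/(2α)) - 1`. Let `a : ℕ → ℝ^n` with `a 0 = a 1` and
`‖a t - a (t-1)‖ ≤ G/(t+s)^α` for `1 ≤ t ≤ T`. Let `ã t` be random vectors such that,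
with `F (t-1)` the σ-field generated by `ã 1, …, ã (t-1)` (`F 0` trivial),
`E[ã t | F (t-1)] = a t` and `E[‖ã t - a t‖² | F (t-1)] ≤ σ²` for `1 ≤ t ≤ T`.
Define `d 0 = d₀` and `d t = (1 - ρ t) • d (t-1) + ρ t • ã t` with `ρ t = 2/(t+s)^(2α/3)`.
Then for every `t ≤ T`, `E[‖a t - d t‖²] ≤ Q/(t+s+1)^(2α/3)` where
`Q = max (‖a 0 - d₀‖²·(s+1)^(2α/3)) (4σ² + 2G²)`. -/
theorem stmt3 {Ω : Type*} [MeasureSpace Ω] [IsProbabilityMeasure (ℙ : Measure Ω)]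
    {n : ℕ} (T : ℕ) (G α σ s : ℝ)
    (hG : 0 ≤ G) (hα : 0 < α) (hα1 : α ≤ 1) (hσ : 0 ≤ σ)
    (hs : (8 : ℝ) ^ (1 / (2 * α)) - 1 ≤ s)
    (a : ℕ → EuclideanSpace ℝ (Fin n))
    (ha01 : a 0 = a 1)
    (ha : ∀ t, 1 ≤ t → t ≤ T → ‖a t - a (t - 1)‖ ≤ G / ((t : ℝ) + s) ^ α)
    (atil : ℕ → Ω → EuclideanSpace ℝ (Fin n))
    (hmeas : ∀ t, 1 ≤ t → t ≤ T → Measurable (atil t))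
    (hint : ∀ t, 1 ≤ t → t ≤ T → Integrable (atil t) ∧
      Integrable (fun ω => ‖atil t ω - a t‖ ^ 2))
    (F : ℕ → MeasurableSpace Ω)
    (hF : ∀ t, F t = ⨆ i ∈ Finset.range t,
      MeasurableSpace.comap (atil (i + 1)) inferInstance)
    (hmean : ∀ t, 1 ≤ t → t ≤ T →
      condExp (F (t - 1)) ℙ (atil t) =ᵐ[ℙ] fun _ => a t)
    (hvar : ∀ t, 1 ≤ t → t ≤ T →
      condExp (F (t - 1)) ℙ (fun ω => ‖atil t ω - a t‖ ^ 2) ≤ᵐ[ℙ] fun _ => σ ^ 2)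
    (ρ : ℕ → ℝ) (hρ : ∀ t, ρ t = 2 / ((t : ℝ) + s) ^ (2 * α / 3))
    (d : ℕ → Ω → EuclideanSpace ℝ (Fin n)) (d₀ : EuclideanSpace ℝ (Fin n))
    (hd0 : ∀ ω, d 0 ω = d₀)
    (hd : ∀ t, 1 ≤ t → t ≤ T → ∀ ω, d t ω = (1 - ρ t) • d (t - 1) ω + ρ t • atil t ω)
    (Q : ℝ) (hQ : Q = max (‖a 0 - d₀‖ ^ 2 * (s + 1) ^ (2 * α / 3)) (4 * σ ^ 2 + 2 * G ^ 2)) :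
    ∀ t ≤ T, (∫ ω, ‖a t - d t ω‖ ^ 2) ≤ Q / ((t : ℝ) + s + 1) ^ (2 * α / 3) := by
  set p : ℝ := 2 * α / 3 with hp_def
  have hp0 : 0 < p := by positivity
  have hp1 : p ≤ 1 := by rw [hp_def]; linarith
  have hs0 : 0 ≤ s := by
    have : (1 : ℝ) ≤ (8 : ℝ) ^ (1 / (2 * α)) :=
      Real.one_le_rpow (by norm_num) (by positivity)
    linarith
  -- (t+s)^p ≥ 2 for t ≥ 1
  have h83 : (8 : ℝ) ^ ((1 : ℝ) / 3) = 2 := by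
    have : ((2 : ℝ) ^ (3 : ℕ) : ℝ) ^ ((1 : ℝ) / 3) = 2 := by
      rw [← Real.rpow_natCast 2 3, ← Real.rpow_mul (by norm_num)]
      norm_num
    rw [show (8:ℝ) = (2:ℝ)^(3:ℕ) by norm_num]; exact this
  have hBig : ∀ t : ℕ, 1 ≤ t → (2 : ℝ) ≤ ((t : ℝ) + s) ^ p := by
    intro t ht
    have hx8 : (8 : ℝ) ^ (1 / (2 * α)) ≤ (t : ℝ) + s := by
      have : (1 : ℝ) ≤ (t : ℝ) := by exact_mod_cast ht
      linarith
    calc (2 : ℝ) = ((8 : ℝ) ^ (1 / (2 * α))) ^ p := by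
          rw [← Real.rpow_mul (by norm_num)]
          rw [show 1 / (2 * α) * p = 1 / 3 by rw [hp_def]; field_simp]
          exact h83.symm
      _ ≤ ((t : ℝ) + s) ^ p :=
          Real.rpow_le_rpow (by positivity) hx8 hp0.le
  -- σ-algebra facts
  have hFle : ∀ t, t ≤ T → F t ≤ (inferInstance : MeasurableSpace Ω) := by
    intro t ht
    rw [hF]
    refine iSup₂_le fun i hi => ?_
    rw [Finset.mem_range] at hi
    exact (hmeas (i + 1) (Nat.succ_le_succ (Nat.zero_le _)) (by omega)).comap_le
  have hFmono : ∀ u v : ℕ, u ≤ v → F u ≤ F v := by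
    intro u v huv
    rw [hF, hF]
    exact biSup_mono fun i hi => Finset.mem_range.mpr (lt_of_lt_of_le (Finset.mem_range.mp hi) huv)
  have hatil_sm : ∀ i u : ℕ, 1 ≤ i → i ≤ u → StronglyMeasurable[F u] (atil i) := by
    intro i u hi hu
    obtain ⟨j, rfl⟩ : ∃ j, i = j + 1 := ⟨i - 1, by omega⟩
    have hcomap : MeasurableSpace.comap (atil (j + 1)) inferInstance ≤ F u := by
      rw [hF]
      exact le_iSup₂ (f := fun k (_ : k ∈ Finset.range u) =>
        MeasurableSpace.comap (atil (k + 1)) inferInstance) j (Finset.mem_range.mpr (by omega))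
    exact ((measurable_iff_comap_le.mpr le_rfl).mono hcomap le_rfl).stronglyMeasurable
  -- Memℒp of atil
  have hatil2 : ∀ t, 1 ≤ t → t ≤ T → MemLp (atil t) 2 ℙ := by
    intro t h1 h2
    have haesm : AEStronglyMeasurable (fun ω => atil t ω - a t) ℙ :=
      ((hmeas t h1 h2).aestronglyMeasurable).sub aestronglyMeasurable_const
    have hsub : MemLp (fun ω => atil t ω - a t) 2 ℙ :=
      (memLp_two_iff_integrable_sq_norm haesm).mpr (hint t h1 h2).2
    have heq : atil t = (fun ω => atil t ω - a t) + fun _ => a t := by funext ω; simp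
    rw [heq]
    exact hsub.add (memLp_const _)
  -- d properties
  have hdprop : ∀ t, t ≤ T → MemLp (d t) 2 ℙ ∧ StronglyMeasurable[F t] (d t) := by
    intro t
    induction t with
    | zero =>
      intro _
      constructor
      · have : d 0 = fun _ => d₀ := funext hd0
        rw [this]; exact memLp_const _
      · have : d 0 = fun _ => d₀ := funext hd0
        rw [this]; exact stronglyMeasurable_const
    | succ k ih =>
      intro hkT
      have hk : k ≤ T := by omega
      obtain ⟨ih2, ihsm⟩ := ih hk
      have hdk : d (k + 1) = fun ω => (1 - ρ (k + 1)) • d k ω + ρ (k + 1) • atil (k + 1) ω := by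
        funext ω
        simpa using hd (k + 1) (by omega) hkT ω
      constructor
      · rw [hdk]
        exact ((ih2.const_smul (1 - ρ (k + 1))).add ((hatil2 (k + 1) (by omega) hkT).const_smul (ρ (k + 1))))
      · rw [hdk]
        exact ((ihsm.mono (hFmono k (k + 1) (by omega))).const_smul (1 - ρ (k + 1))).add
          ((hatil_sm (k + 1) (k + 1) (by omega) le_rfl).const_smul (ρ (k + 1)))
  -- core step estimate
  have key : ∀ k, 1 ≤ k → k ≤ T →
      (∫ ω, ‖a k - d k ω‖ ^ 2) ≤
        (1 - ρ k) ^ 2 * (∫ ω, ‖a k - d (k - 1) ω‖ ^ 2) + (ρ k) ^ 2 * σ ^ 2 := by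
    intro k hk1 hkT
    have hm : F (k - 1) ≤ (inferInstance : MeasurableSpace Ω) := hFle _ (by omega)
    haveI : SigmaFinite ((ℙ : Measure Ω).trim hm) := inferInstance
    set f := fun ω => a k - d (k - 1) ω with hf_def
    set v := fun ω => atil k ω - a k with hv_def
    obtain ⟨hf2', hfsm'⟩ := hdprop (k - 1) (by omega)
    have hf2 : MemLp f 2 ℙ := (memLp_const (a k)).sub hf2'
    have hfsm : StronglyMeasurable[F (k - 1)] f := stronglyMeasurable_const.sub hfsm'
    have hv2 : MemLp v 2 ℙ := (hatil2 k hk1 hkT).sub (memLp_const _)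
    have hvint : Integrable v ℙ := (hint k hk1 hkT).1.sub (integrable_const _)
    have hv_sq_int : Integrable (fun ω => ‖v ω‖ ^ 2) ℙ := (hint k hk1 hkT).2
    have hf_sq_int : Integrable (fun ω => ‖f ω‖ ^ 2) ℙ :=
      (memLp_two_iff_integrable_sq_norm hf2.aestronglyMeasurable).mp hf2
    -- coordinates
    have hfi2 : ∀ i, MemLp (fun ω => f ω i) 2 ℙ := by
      intro i
      refine hf2.of_le ?_ ?_
      · exact (EuclideanSpace.proj (𝕜 := ℝ) i).continuous.comp_aestronglyMeasurable
          hf2.aestronglyMeasurable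
      · filter_upwards with ω
        simpa [Real.norm_eq_abs] using aux_coord (f ω) i
    have hvi2 : ∀ i, MemLp (fun ω => v ω i) 2 ℙ := by
      intro i
      refine hv2.of_le ?_ ?_
      · exact (EuclideanSpace.proj (𝕜 := ℝ) i).continuous.comp_aestronglyMeasurable
          hv2.aestronglyMeasurable
      · filter_upwards with ω
        simpa [Real.norm_eq_abs] using aux_coord (v ω) i
    have hvi_int : ∀ i, Integrable (fun ω => v ω i) ℙ :=
      fun i => (hvi2 i).integrable (by norm_num)
    have hfv_int : ∀ i, Integrable ((fun ω => f ω i) * fun ω => v ω i) ℙ := by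
      intro i
      have := ((hvi2 i).smul (hfi2 i) (p := 2) (q := 2) (r := 1)
        (hpqr := ⟨by simpa using ENNReal.inv_two_add_inv_two⟩))
      rw [memLp_one_iff_integrable] at this
      exact this
    have hfv_int' : ∀ i, Integrable (fun ω => f ω i * v ω i) ℙ := fun i => hfv_int i
    have hfi_sm : ∀ i, StronglyMeasurable[F (k - 1)] (fun ω => f ω i) := by
      intro i
      exact ((EuclideanSpace.proj (𝕜 := ℝ) i).continuous.comp_stronglyMeasurable hfsm)
    -- set integrals of v vanish
    have hset_v : ∀ S : Set Ω, MeasurableSet[F (k - 1)] S → ∫ ω in S, v ω ∂ℙ = 0 := by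
      intro S hS
      have hS0 : MeasurableSet S := hm S hS
      have h1 : ∫ ω in S, atil k ω ∂ℙ = ∫ ω in S, (fun _ => a k) ω ∂ℙ := by
        rw [← setIntegral_condExp hm (hint k hk1 hkT).1 hS]
        exact setIntegral_congr_ae hS0 ((hmean k hk1 hkT).mono fun ω h _ => h)
      rw [hv_def]
      rw [integral_sub ((hint k hk1 hkT).1.integrableOn) (integrable_const _).integrableOn]
      rw [h1]
      simp
    -- conditional expectation of coordinates of v is zero
    have hgi : ∀ i, ℙ[fun ω => v ω i|F (k - 1)] =ᵐ[ℙ] 0 := by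
      intro i
      refine (ae_eq_condExp_of_forall_setIntegral_eq hm (hvi_int i)
        (fun S _ _ => integrableOn_zero) (fun S hS _ => ?_)
        (StronglyMeasurable.aestronglyMeasurable (stronglyMeasurable_zero : StronglyMeasurable[F (k - 1)] (0 : Ω → ℝ)))).symm
      have hcc := (EuclideanSpace.proj (𝕜 := ℝ) i).integral_comp_comm
        (hvint.integrableOn (s := S))
      rw [integral_zero]
      have : ∫ ω in S, v ω i ∂ℙ = (EuclideanSpace.proj (𝕜 := ℝ) i) (∫ ω in S, v ω ∂ℙ) := hcc
      rw [this, hset_v S hS, map_zero]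
    -- cross terms vanish
    have hzero_i : ∀ i, (∫ ω, f ω i * v ω i ∂ℙ) = 0 := by
      intro i
      have hpull := condExp_mul_of_stronglyMeasurable_left (hfi_sm i) (hfv_int i) (hvi_int i)
      have hzero : ℙ[(fun ω => f ω i) * fun ω => v ω i|F (k - 1)] =ᵐ[ℙ] 0 := by
        refine hpull.trans ?_
        filter_upwards [hgi i] with ω hω
        simp [hω]
      calc (∫ ω, f ω i * v ω i ∂ℙ)
          = ∫ ω, (ℙ[(fun ω => f ω i) * fun ω => v ω i|F (k - 1)]) ω ∂ℙ :=
            (integral_condExp hm).symm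
        _ = ∫ ω, (0 : Ω → ℝ) ω ∂ℙ := integral_congr_ae hzero
        _ = 0 := by simp
    have hIP : (∫ ω, (inner ℝ (f ω) (v ω) : ℝ) ∂ℙ) = 0 := by
      have hrw : ∀ ω, (inner ℝ (f ω) (v ω) : ℝ) = ∑ i, f ω i * v ω i := by
        intro ω
        simp [PiLp.inner_apply, RCLike.inner_apply, conj_trivial, mul_comm]
      simp_rw [hrw]
      rw [integral_finset_sum _ (fun i _ => hfv_int' i)]
      exact Finset.sum_eq_zero fun i _ => hzero_i i
    have hIP_int : Integrable (fun ω => (inner ℝ (f ω) (v ω) : ℝ)) ℙ := by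
      have hrw : ∀ ω, (inner ℝ (f ω) (v ω) : ℝ) = ∑ i, f ω i * v ω i := by
        intro ω
        simp [PiLp.inner_apply, RCLike.inner_apply, conj_trivial, mul_comm]
      simp_rw [hrw]
      exact integrable_finset_sum _ fun i _ => hfv_int' i
    -- variance bound
    have hI3 : (∫ ω, ‖v ω‖ ^ 2 ∂ℙ) ≤ σ ^ 2 := by
      have h2 : (∫ ω, (ℙ[fun ω => ‖atil k ω - a k‖ ^ 2|F (k - 1)]) ω ∂ℙ)
          ≤ ∫ _ω : Ω, σ ^ 2 ∂ℙ :=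
        integral_mono_ae integrable_condExp (integrable_const _) (hvar k hk1 hkT)
      have h1 : (∫ ω, ‖v ω‖ ^ 2 ∂ℙ)
          = ∫ ω, (ℙ[fun ω => ‖atil k ω - a k‖ ^ 2|F (k - 1)]) ω ∂ℙ :=
        (integral_condExp hm).symm
      rw [h1]
      simpa using h2
    -- pointwise expansion
    have hps : ∀ ω, ‖a k - d k ω‖ ^ 2 =
        (1 - ρ k) ^ 2 * ‖f ω‖ ^ 2 - 2 * (ρ k * (1 - ρ k)) * (inner ℝ (f ω) (v ω) : ℝ)
          + (ρ k) ^ 2 * ‖v ω‖ ^ 2 := by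
      intro ω
      have heq : a k - d k ω = (1 - ρ k) • f ω - ρ k • v ω := by
        rw [hd k hk1 hkT ω, hf_def, hv_def]
        module
      rw [heq, norm_sub_sq_real, norm_smul, norm_smul, real_inner_smul_left,
        real_inner_smul_right]
      simp [mul_pow, sq_abs]
      ring
    have hexp : (∫ ω, ‖a k - d k ω‖ ^ 2)
        = (1 - ρ k) ^ 2 * (∫ ω, ‖f ω‖ ^ 2) - 2 * (ρ k * (1 - ρ k)) * (∫ ω, (inner ℝ (f ω) (v ω) : ℝ))
          + (ρ k) ^ 2 * (∫ ω, ‖v ω‖ ^ 2) := by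
      have hInt1 : Integrable (fun ω => (1 - ρ k) ^ 2 * ‖f ω‖ ^ 2
          - 2 * (ρ k * (1 - ρ k)) * (inner ℝ (f ω) (v ω) : ℝ)) ℙ := by
        exact (hf_sq_int.const_mul _).sub (hIP_int.const_mul _)
      have hInt2 : Integrable (fun ω => (ρ k) ^ 2 * ‖v ω‖ ^ 2) ℙ := hv_sq_int.const_mul _
      have hIntA : Integrable (fun ω => (1 - ρ k) ^ 2 * ‖f ω‖ ^ 2) ℙ := hf_sq_int.const_mul _
      have hIntB : Integrable (fun ω => 2 * (ρ k * (1 - ρ k)) * (inner ℝ (f ω) (v ω) : ℝ)) ℙ :=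
        hIP_int.const_mul _
      simp_rw [hps]
      rw [integral_add hInt1 hInt2, integral_sub hIntA hIntB,
        integral_const_mul, integral_const_mul, integral_const_mul]
    rw [hexp, hIP]
    have hρ2 : (0 : ℝ) ≤ (ρ k) ^ 2 := sq_nonneg _
    nlinarith [hI3, sq_nonneg (ρ k)]

  -- nonnegativity of the second moments
  have enonneg : ∀ u : ℕ, 0 ≤ ∫ ω, ‖a u - d u ω‖ ^ 2 :=
    fun u => integral_nonneg fun ω => by positivity
  -- one-step drift bound
  have step2 : ∀ k, 1 ≤ k → k ≤ T →
      (∫ ω, ‖a k - d (k - 1) ω‖ ^ 2) ≤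
        (1 + ρ k) * (∫ ω, ‖a (k - 1) - d (k - 1) ω‖ ^ 2)
          + (1 + 1 / ρ k) * ‖a k - a (k - 1)‖ ^ 2 := by
    intro k hk1 hkT
    have hρpos : 0 < ρ k := by
      rw [hρ]
      have := hBig k hk1
      positivity
    have hprev2 : MemLp (fun ω => a (k - 1) - d (k - 1) ω) 2 ℙ :=
      (memLp_const _).sub (hdprop (k - 1) (by omega)).1
    have hcur2 : MemLp (fun ω => a k - d (k - 1) ω) 2 ℙ :=
      (memLp_const _).sub (hdprop (k - 1) (by omega)).1
    have hint_prev : Integrable (fun ω => ‖a (k - 1) - d (k - 1) ω‖ ^ 2) ℙ :=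
      (memLp_two_iff_integrable_sq_norm hprev2.aestronglyMeasurable).mp hprev2
    have hint_cur : Integrable (fun ω => ‖a k - d (k - 1) ω‖ ^ 2) ℙ :=
      (memLp_two_iff_integrable_sq_norm hcur2.aestronglyMeasurable).mp hcur2
    have hptw : ∀ ω, ‖a k - d (k - 1) ω‖ ^ 2 ≤
        (1 + ρ k) * ‖a (k - 1) - d (k - 1) ω‖ ^ 2
          + (1 + 1 / ρ k) * ‖a k - a (k - 1)‖ ^ 2 := by
      intro ω
      have heq : a k - d (k - 1) ω = (a (k - 1) - d (k - 1) ω) + (a k - a (k - 1)) := by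
        abel
      rw [heq]
      exact aux_norm_add_sq_le _ _ hρpos
    calc (∫ ω, ‖a k - d (k - 1) ω‖ ^ 2)
        ≤ ∫ ω, ((1 + ρ k) * ‖a (k - 1) - d (k - 1) ω‖ ^ 2
            + (1 + 1 / ρ k) * ‖a k - a (k - 1)‖ ^ 2) :=
          integral_mono hint_cur ((hint_prev.const_mul _).add (integrable_const _)) hptw
      _ = (1 + ρ k) * (∫ ω, ‖a (k - 1) - d (k - 1) ω‖ ^ 2)
            + (1 + 1 / ρ k) * ‖a k - a (k - 1)‖ ^ 2 := by
          rw [integral_add (hint_prev.const_mul _) (integrable_const _),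
            integral_const_mul, integral_const]
          simp
  -- combined one-step recursion
  have main : ∀ k, 1 ≤ k → k ≤ T →
      (∫ ω, ‖a k - d k ω‖ ^ 2) ≤
        (1 - 2 / (((k : ℝ) + s) ^ p)) * (∫ ω, ‖a (k - 1) - d (k - 1) ω‖ ^ 2)
          + (G ^ 2 + 4 * σ ^ 2) / ((((k : ℝ) + s) ^ p) ^ 2) := by
    intro k hk1 hkT
    have hkk := key k hk1 hkT
    have hs2 := step2 k hk1 hkT
    have hh2 : (2 : ℝ) ≤ ((k : ℝ) + s) ^ p := hBig k hk1
    have hx1 : (1 : ℝ) ≤ (k : ℝ) + s := by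
      have : (1 : ℝ) ≤ (k : ℝ) := by exact_mod_cast hk1
      linarith
    have hx0 : (0 : ℝ) < (k : ℝ) + s := by linarith
    have hρk : ρ k = 2 / (((k : ℝ) + s) ^ p) := hρ k
    have hKb : ‖a k - a (k - 1)‖ ^ 2 * ((((k : ℝ) + s) ^ p) ^ 3) ≤ G ^ 2 := by
      have hA := ha k hk1 hkT
      have h1 : ‖a k - a (k - 1)‖ ^ 2 ≤ (G / ((k : ℝ) + s) ^ α) ^ 2 :=
        pow_le_pow_left₀ (norm_nonneg _) hA 2
      have h2 : ((((k : ℝ) + s) ^ α) ^ 2 : ℝ) = (((k : ℝ) + s) ^ p) ^ 3 := by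
        rw [← Real.rpow_natCast (((k : ℝ) + s) ^ α) 2,
          ← Real.rpow_natCast (((k : ℝ) + s) ^ p) 3,
          ← Real.rpow_mul hx0.le, ← Real.rpow_mul hx0.le]
        have hexp : α * ((2 : ℕ) : ℝ) = p * ((3 : ℕ) : ℝ) := by
          rw [hp_def]; push_cast; ring
        rw [hexp]
      have hα2 : (0 : ℝ) < (((k : ℝ) + s) ^ α) ^ 2 := by positivity
      calc ‖a k - a (k - 1)‖ ^ 2 * ((((k : ℝ) + s) ^ p) ^ 3)
          ≤ (G / ((k : ℝ) + s) ^ α) ^ 2 * ((((k : ℝ) + s) ^ p) ^ 3) :=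
            mul_le_mul_of_nonneg_right h1 (by positivity)
        _ = G ^ 2 / ((((k : ℝ) + s) ^ α) ^ 2) * ((((k : ℝ) + s) ^ p) ^ 3) := by
            rw [div_pow]
        _ = G ^ 2 := by rw [← h2]; field_simp
    have hinv : 1 / ρ k = (((k : ℝ) + s) ^ p) / 2 := by
      rw [hρk, one_div_div]
    have he0 : 0 ≤ ∫ ω, ‖a (k - 1) - d (k - 1) ω‖ ^ 2 :=
      integral_nonneg fun ω => by positivity
    calc (∫ ω, ‖a k - d k ω‖ ^ 2)
        ≤ (1 - ρ k) ^ 2 * (∫ ω, ‖a k - d (k - 1) ω‖ ^ 2) + (ρ k) ^ 2 * σ ^ 2 := hkk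
      _ ≤ (1 - ρ k) ^ 2 * ((1 + ρ k) * (∫ ω, ‖a (k - 1) - d (k - 1) ω‖ ^ 2)
            + (1 + 1 / ρ k) * ‖a k - a (k - 1)‖ ^ 2) + (ρ k) ^ 2 * σ ^ 2 := by
          have := mul_le_mul_of_nonneg_left hs2 (sq_nonneg (1 - ρ k))
          linarith
      _ = (1 - 2 / (((k : ℝ) + s) ^ p)) ^ 2
            * ((1 + 2 / (((k : ℝ) + s) ^ p)) * (∫ ω, ‖a (k - 1) - d (k - 1) ω‖ ^ 2)
              + (1 + (((k : ℝ) + s) ^ p) / 2) * ‖a k - a (k - 1)‖ ^ 2)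
            + (2 / (((k : ℝ) + s) ^ p)) ^ 2 * σ ^ 2 := by
          rw [hinv, hρk]
      _ ≤ (1 - 2 / (((k : ℝ) + s) ^ p)) * (∫ ω, ‖a (k - 1) - d (k - 1) ω‖ ^ 2)
            + (G ^ 2 + 4 * σ ^ 2) / ((((k : ℝ) + s) ^ p) ^ 2) :=
          aux_step hh2 he0 (by positivity) hKb (sq_nonneg σ)
  -- global constants
  have hQ0 : 0 ≤ Q := by
    rw [hQ]
    exact le_trans (by positivity) (le_max_right _ _)
  have hQC : G ^ 2 + 4 * σ ^ 2 ≤ Q := by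
    rw [hQ]
    refine le_trans ?_ (le_max_right _ _)
    nlinarith [sq_nonneg G]
  -- induction
  intro t
  induction t with
  | zero =>
    intro _
    have hconst : (fun ω => ‖a 0 - d 0 ω‖ ^ 2) = fun _ : Ω => ‖a 0 - d₀‖ ^ 2 := by
      funext ω; rw [hd0]
    rw [hconst, integral_const]
    simp only [measure_univ, probReal_univ, ENNReal.toReal_one, one_smul, Nat.cast_zero, zero_add]
    have hpos : (0 : ℝ) < (s + 1) ^ p := Real.rpow_pos_of_pos (by linarith) _
    rw [le_div_iff₀ hpos, hQ]
    exact le_max_left _ _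
  | succ t ih =>
    intro hT
    have htT : t ≤ T := by omega
    have ihe := ih htT
    have hmn := main (t + 1) (by omega) hT
    simp only [Nat.add_sub_cancel] at hmn
    have hcast : ((t + 1 : ℕ) : ℝ) = (t : ℝ) + 1 := by push_cast; ring
    rw [hcast] at hmn ⊢
    have hceq : ((t : ℕ) : ℝ) + s + 1 = (t : ℝ) + 1 + s := by ring
    rw [hceq] at ihe
    have hx1 : (1 : ℝ) ≤ (t : ℝ) + 1 + s := by
      have : (0 : ℝ) ≤ (t : ℝ) := Nat.cast_nonneg t
      linarith
    have hh2X : (2 : ℝ) ≤ ((t : ℝ) + 1 + s) ^ p := by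
      have := hBig (t + 1) (by omega)
      rwa [hcast] at this
    have hgoal : ((t : ℝ) + 1 + s + 1) ^ p = (((t : ℝ) + 1 + s) + 1) ^ p := rfl
    exact hmn.trans (aux_final hx1 hp0 hp1 hh2X hQ0 hQC (enonneg t) ihe)
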